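/- arXiv:2201.07930 — 2 statements merged into one kernel-verified Lean document; each statement's English description precedes it below -/
import Mathlib

section
/- Skorokhod-type obstacle problem, uniqueness: let η_t := max_{0≤v≤t} L_v for t ∈ {0,...,N-1}. Suppose ζ = (ζ_t)_{t=0,...,N-1} is another adapted, square-integrable, a.s. nondecreasing process such that the process Z defined by Z_t := E_t[Σ_{u=t}^{N-1} ζ_u + X_N] for t ∈ {0,...,N-1} and Z_N := X_N satisfies Z_t ≥ X_t a.s. for every t ∈ {0,...,N}, and a.s., for every t ∈ {0,...,N-1} with ζ_t > ζ_{t-1} (convention ζ_{-1} = -∞, so t = 0 is always a point of increase) one has Z_t = X_t. Then ζ_t = η_t a.s. for every t ∈ {0,...,N-1}. -/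
open MeasureTheory Filter

/-- Running maximum `max_{t ≤ v ≤ u} L v ω` (intended for `t ≤ u`). -/
noncomputable def runMax {Ω : Type*} (L : ℕ → Ω → ℝ) (t u : ℕ) (ω : Ω) : ℝ :=
  (Finset.Icc t u).fold max (L t ω) fun v => L v ω

/-- Running minimum `min_{t ≤ v ≤ u} K v ω` (intended for `t ≤ u`). -/
noncomputable def runMin {Ω : Type*} (K : ℕ → Ω → ℝ) (t u : ℕ) (ω : Ω) : ℝ :=
  (Finset.Icc t u).fold min (K t ω) fun v => K v ω

/-- A discrete-time nonlinear expectation on the horizon `{0, ..., N}`: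
a family of maps `E t` sending square-integrable `F N`-measurable random
variables to square-integrable `F t`-measurable random variables, satisfying
monotonicity, strict monotonicity, translation invariance, the tower property,
the zero-one law and monotone convergence. -/
structure NLExp {Ω : Type*} {m0 : MeasurableSpace Ω} (μ : Measure Ω)
    (F : Filtration ℕ m0) (N : ℕ) where
  E : ℕ → (Ω → ℝ) → Ω → ℝ
  adapted : ∀ t, t ≤ N → ∀ ξ : Ω → ℝ, StronglyMeasurable[F N] ξ → MemLp ξ 2 μ →
    StronglyMeasurable[F t] (E t ξ)
  sqInt : ∀ t, t ≤ N → ∀ ξ : Ω → ℝ, StronglyMeasurable[F N] ξ → MemLp ξ 2 μ →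
    MemLp (E t ξ) 2 μ
  mono : ∀ t, t ≤ N → ∀ ξ η : Ω → ℝ, StronglyMeasurable[F N] ξ → MemLp ξ 2 μ →
    StronglyMeasurable[F N] η → MemLp η 2 μ → ξ ≤ᵐ[μ] η → E t ξ ≤ᵐ[μ] E t η
  strictMono : ∀ t, t ≤ N → ∀ ξ η : Ω → ℝ, StronglyMeasurable[F N] ξ → MemLp ξ 2 μ →
    StronglyMeasurable[F N] η → MemLp η 2 μ → ξ ≤ᵐ[μ] η →
    0 < μ {ω | ξ ω < η ω} → 0 < μ {ω | E t ξ ω < E t η ω}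
  translation : ∀ t, t ≤ N → ∀ ξ ζ : Ω → ℝ, StronglyMeasurable[F N] ξ → MemLp ξ 2 μ →
    StronglyMeasurable[F t] ζ → MemLp ζ 2 μ → E t (ξ + ζ) =ᵐ[μ] E t ξ + ζ
  tower : ∀ s t, s ≤ t → t ≤ N → ∀ ξ : Ω → ℝ, StronglyMeasurable[F N] ξ → MemLp ξ 2 μ →
    E s (E t ξ) =ᵐ[μ] E s ξ
  zeroOne : ∀ t, t ≤ N → ∀ ξ η : Ω → ℝ, StronglyMeasurable[F N] ξ → MemLp ξ 2 μ →
    StronglyMeasurable[F N] η → MemLp η 2 μ → ∀ A : Set Ω, MeasurableSet[F t] A →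
    E t (A.indicator ξ + Aᶜ.indicator η) =ᵐ[μ]
      A.indicator (E t ξ) + Aᶜ.indicator (E t η)
  monoConv : ∀ t, t ≤ N → ∀ (ξs : ℕ → Ω → ℝ) (ξ : Ω → ℝ),
    (∀ n, StronglyMeasurable[F N] (ξs n)) → (∀ n, MemLp (ξs n) 2 μ) →
    StronglyMeasurable[F N] ξ → MemLp ξ 2 μ →
    (∀ᵐ ω ∂μ, (Monotone fun n => ξs n ω) ∨ (Antitone fun n => ξs n ω)) →
    (∀ᵐ ω ∂μ, Tendsto (fun n => ξs n ω) atTop (nhds (ξ ω))) →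
    ∀ᵐ ω ∂μ, Tendsto (fun n => E t (ξs n) ω) atTop (nhds (E t ξ ω))

section RunMax
variable {Ω : Type*} {L : ℕ → Ω → ℝ} {t u v : ℕ} {ω : Ω}

lemma le_runMax (h1 : t ≤ v) (h2 : v ≤ u) : L v ω ≤ runMax L t u ω :=
  (Finset.le_fold_max _).2 (Or.inr ⟨v, Finset.mem_Icc.2 ⟨h1, h2⟩, le_rfl⟩)

lemma runMax_le {c : ℝ} (hc : ∀ v, t ≤ v → v ≤ u → L v ω ≤ c) (hct : L t ω ≤ c) :
    runMax L t u ω ≤ c :=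
  (Finset.fold_max_le _).2 ⟨hct, fun x hx => hc x (Finset.mem_Icc.1 hx).1 (Finset.mem_Icc.1 hx).2⟩

lemma runMax_le' {c : ℝ} (h : t ≤ u) (hc : ∀ v, t ≤ v → v ≤ u → L v ω ≤ c) :
    runMax L t u ω ≤ c :=
  runMax_le hc (hc t le_rfl h)

lemma runMax_self : runMax L t t ω = L t ω :=
  le_antisymm (runMax_le' le_rfl fun v h1 h2 => by rw [le_antisymm h2 h1]) (le_runMax le_rfl le_rfl)

lemma runMax_mono_left {s : ℕ} (hst : s ≤ t) (h : t ≤ u) :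
    runMax L t u ω ≤ runMax L s u ω :=
  runMax_le' h fun v hv1 hv2 => le_runMax (hst.trans hv1) hv2

lemma runMax_succ (h : t ≤ u) :
    runMax L t (u + 1) ω = max (runMax L t u ω) (L (u + 1) ω) := by
  refine le_antisymm (runMax_le' (h.trans (Nat.le_succ u)) fun v hv1 hv2 => ?_)
    (max_le (runMax_le' h fun v hv1 hv2 => le_runMax hv1 (hv2.trans (Nat.le_succ u)))
      (le_runMax (h.trans (Nat.le_succ u)) le_rfl))
  rcases Nat.lt_succ_iff_lt_or_eq.1 (Nat.lt_succ_of_le hv2) with h3 | h3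
  · exact le_trans (le_runMax hv1 (Nat.lt_succ_iff.1 h3)) (le_max_left _ _)
  · rw [h3]; exact le_max_right _ _

lemma runMax_cons (h : t < u) :
    runMax L t u ω = max (L t ω) (runMax L (t+1) u ω) := by
  refine le_antisymm (runMax_le' h.le fun v hv1 hv2 => ?_)
    (max_le (le_runMax le_rfl h.le) (runMax_le' h fun v hv1 hv2 => le_runMax (le_trans (Nat.le_succ t) hv1) hv2))
  rcases Nat.eq_or_lt_of_le hv1 with h3 | h3
  · rw [← h3]; exact le_max_left _ _
  · exact le_trans (le_runMax h3 hv2) (le_max_right _ _)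

lemma abs_runMax_le (h : t ≤ u) :
    |runMax L t u ω| ≤ ∑ v ∈ Finset.Ico t (u + 1), |L v ω| := by
  induction u, h using Nat.le_induction with
  | base => rw [runMax_self]; simp [Nat.Ico_succ_singleton]
  | succ n hn ih =>
      rw [runMax_succ hn, Finset.sum_Ico_succ_top (by omega)]
      refine le_trans (abs_max_le_max_abs_abs ..) (max_le ?_ ?_)
      · exact le_add_of_le_of_nonneg ih (abs_nonneg _)
      · exact le_add_of_nonneg_left (Finset.sum_nonneg fun v _ => abs_nonneg _)

lemma stronglyMeasurable_runMax {m : MeasurableSpace Ω} (h : t ≤ u)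
    (hL : ∀ v, t ≤ v → v ≤ u → StronglyMeasurable[m] (L v)) :
    StronglyMeasurable[m] (fun ω => runMax L t u ω) := by
  induction u, h using Nat.le_induction with
  | base => simpa [runMax_self] using hL t le_rfl le_rfl
  | succ n hn ih =>
      have : (fun ω => runMax L t (n+1) ω)
          = (fun ω => runMax L t n ω) ⊔ (L (n+1)) := by
        funext ω; rw [runMax_succ hn]; rfl
      rw [this]
      exact (ih (fun v hv1 hv2 => hL v hv1 (hv2.trans (Nat.le_succ n)))).sup
        (hL (n+1) (hn.trans (Nat.le_succ n)) le_rfl)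

end RunMax

section MemLp
variable {Ω : Type*} {m0 : MeasurableSpace Ω} {μ : Measure Ω}

lemma memLp_max {f g : Ω → ℝ} (hf : MemLp f 2 μ) (hg : MemLp g 2 μ) :
    MemLp (fun ω => max (f ω) (g ω)) 2 μ := by
  refine MemLp.of_le (hf.abs.add hg.abs) (hf.aestronglyMeasurable.sup hg.aestronglyMeasurable) ?_
  filter_upwards with ω
  simp only [Real.norm_eq_abs, Pi.add_apply, Pi.abs_apply]
  rw [abs_of_nonneg (by positivity : (0:ℝ) ≤ |f ω| + |g ω|)]
  rcases le_total (f ω) (g ω) with h | h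
  · rw [max_eq_right h]; exact le_add_of_nonneg_left (abs_nonneg _)
  · rw [max_eq_left h]; exact le_add_of_nonneg_right (abs_nonneg _)

end MemLp

namespace NLExp
variable {Ω : Type*} {m0 : MeasurableSpace Ω} {μ : Measure Ω} [IsProbabilityMeasure μ]
  {F : Filtration ℕ m0} {N : ℕ} (EE : NLExp μ F N)

lemma E_congr {t : ℕ} (ht : t ≤ N) {ξ η : Ω → ℝ}
    (hξm : StronglyMeasurable[F N] ξ) (hξp : MemLp ξ 2 μ)
    (hηm : StronglyMeasurable[F N] η) (hηp : MemLp η 2 μ)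
    (h : ξ =ᵐ[μ] η) : EE.E t ξ =ᵐ[μ] EE.E t η := by
  have h1 := EE.mono t ht ξ η hξm hξp hηm hηp (h.le)
  have h2 := EE.mono t ht η ξ hηm hηp hξm hξp (h.symm.le)
  filter_upwards [h1, h2] with ω h1 h2
  exact le_antisymm h1 h2

lemma E_zero {t : ℕ} (ht : t ≤ N) : EE.E t 0 =ᵐ[μ] 0 := by
  have sm0 : StronglyMeasurable[F N] (0 : Ω → ℝ) := stronglyMeasurable_const
  have mp0 : MemLp (0 : Ω → ℝ) 2 μ := memLp_const 0
  have hsm := EE.adapted t ht 0 sm0 mp0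
  have hmp := EE.sqInt t ht 0 sm0 mp0
  have h1 := EE.translation t ht 0 (EE.E t 0) sm0 mp0 hsm hmp
  have h2 := EE.tower t t le_rfl ht 0 sm0 mp0
  have h3 : (0 : Ω → ℝ) + EE.E t 0 = EE.E t 0 := by funext ω; simp
  rw [h3] at h1
  filter_upwards [h1, h2] with ω h1 h2
  simp only [Pi.add_apply] at h1
  simp only [Pi.zero_apply]
  linarith

lemma E_id {t : ℕ} (ht : t ≤ N) {ξ : Ω → ℝ}
    (hξm : StronglyMeasurable[F t] ξ) (hξp : MemLp ξ 2 μ) :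
    EE.E t ξ =ᵐ[μ] ξ := by
  have sm0 : StronglyMeasurable[F N] (0 : Ω → ℝ) := stronglyMeasurable_const
  have mp0 : MemLp (0 : Ω → ℝ) 2 μ := memLp_const 0
  have h1 := EE.translation t ht 0 ξ sm0 mp0 hξm hξp
  have h3 : (0 : Ω → ℝ) + ξ = ξ := by funext ω; simp
  rw [h3] at h1
  filter_upwards [h1, EE.E_zero ht] with ω h1 h2
  rw [h1]
  simp only [Pi.add_apply, h2]
  simp

end NLExp

section MemLpL
variable {Ω : Type*} {m0 : MeasurableSpace Ω} {μ : Measure Ω}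
  {F : Filtration ℕ m0} {N : ℕ} {L : ℕ → Ω → ℝ}

lemma memLp_runMax {t u : ℕ} (h : t ≤ u)
    (hm : ∀ v, t ≤ v → v ≤ u → StronglyMeasurable[m0] (L v))
    (hp : ∀ v, t ≤ v → v ≤ u → MemLp (L v) 2 μ) :
    MemLp (fun ω => runMax L t u ω) 2 μ := by
  refine MemLp.of_le (g := fun ω => ∑ v ∈ Finset.Ico t (u+1), |L v ω|)
    (memLp_finset_sum _ fun v hv => (hp v (Finset.mem_Ico.1 hv).1
      (Nat.lt_succ_iff.1 (Finset.mem_Ico.1 hv).2)).abs)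
    (stronglyMeasurable_runMax h hm).aestronglyMeasurable ?_
  filter_upwards with ω
  simp only [Real.norm_eq_abs]
  exact le_trans (abs_runMax_le h) (le_abs_self _)

lemma memLp_L (hN : 1 ≤ N)
    (hLm : ∀ v, v < N → StronglyMeasurable[m0] (L v))
    (hS : ∀ t, t < N → MemLp (fun ω => ∑ u ∈ Finset.Ico t N, runMax L t u ω) 2 μ) :
    ∀ t, t < N → MemLp (L t) 2 μ := by
  suffices h : ∀ k t, t < N → N - t ≤ k → MemLp (L t) 2 μ by
    exact fun t ht => h (N - t) t ht le_rfl
  intro k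
  induction k with
  | zero => intro t ht h; omega
  | succ k ih =>
      intro t ht hk
      rcases Nat.lt_or_ge t (N-1) with h1 | h1
      · have hAll : ∀ v, t < v → v < N → MemLp (L v) 2 μ :=
          fun v hv1 hv2 => ih v hv2 (by omega)
        have hM1 : ∀ u, t+1 ≤ u → u < N → MemLp (fun ω => runMax L (t+1) u ω) 2 μ :=
          fun u hu1 hu2 => memLp_runMax hu1
            (fun v hv1 hv2 => hLm v (by omega))
            (fun v hv1 hv2 => hAll v (by omega) (by omega))
        set S : ℕ → Ω → ℝ := fun s ω => ∑ u ∈ Finset.Ico s N, runMax L s u ω with hSdef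
        have hSt := hS t ht
        have hSt1 := hS (t+1) (by omega)
        have hsplit : ∀ ω, S t ω = L t ω + ∑ u ∈ Finset.Ico (t+1) N, runMax L t u ω := by
          intro ω
          simp only [hSdef]
          rw [Finset.sum_eq_sum_Ico_succ_bot ht, runMax_self]
        set U : Ω → ℝ := fun ω => S t ω - S (t+1) ω with hUdef
        have hU : MemLp U 2 μ := hSt.sub hSt1
        have hLU : ∀ ω, L t ω ≤ U ω := by
          intro ω
          have h2 : S (t+1) ω ≤ ∑ u ∈ Finset.Ico (t+1) N, runMax L t u ω :=
            Finset.sum_le_sum fun u hu =>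
              runMax_mono_left (Nat.le_succ t) (Finset.mem_Ico.1 hu).1
          have := hsplit ω
          simp only [hUdef]
          linarith
        set V : Ω → ℝ := fun ω =>
          S t ω - ∑ u ∈ Finset.Ico (t+1) N, max (U ω) (runMax L (t+1) u ω) with hVdef
        have hV : MemLp V 2 μ := by
          refine hSt.sub (memLp_finset_sum _ fun u hu => ?_)
          exact memLp_max hU (hM1 u (Finset.mem_Ico.1 hu).1 (Finset.mem_Ico.1 hu).2)
        have hVL : ∀ ω, V ω ≤ L t ω := by
          intro ω
          have h2 : ∑ u ∈ Finset.Ico (t+1) N, runMax L t u ω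
              ≤ ∑ u ∈ Finset.Ico (t+1) N, max (U ω) (runMax L (t+1) u ω) := by
            refine Finset.sum_le_sum fun u hu => ?_
            rw [runMax_cons (Finset.mem_Ico.1 hu).1]
            exact max_le_max (hLU ω) le_rfl
          have := hsplit ω
          simp only [hVdef]
          linarith
        refine MemLp.of_le (hU.abs.add hV.abs)
          ((hLm t ht).aestronglyMeasurable) ?_
        filter_upwards with ω
        simp only [Real.norm_eq_abs, Pi.add_apply, Pi.abs_apply]
        rw [abs_of_nonneg (by positivity : (0:ℝ) ≤ |U ω| + |V ω|)]
        refine le_trans (abs_le_max_abs_abs (hVL ω) (hLU ω)) (max_le ?_ ?_)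
        · exact le_add_of_nonneg_left (abs_nonneg _)
        · exact le_add_of_nonneg_right (abs_nonneg _)
      · -- t = N - 1
        have h2 : t = N - 1 := by omega
        have h3 : Finset.Ico t N = {t} := by
          have : N = t + 1 := by omega
          rw [this, Nat.Ico_succ_singleton]
        have h4 : (fun ω => ∑ u ∈ Finset.Ico t N, runMax L t u ω) = L t := by
          funext ω; rw [h3]; simp [runMax_self]
        rw [← h4]
        exact hS t ht

end MemLpL

open scoped Classical in
lemma indicator_add_compl_apply {Ω : Type*} (A : Set Ω) (f g : Ω → ℝ) (ω : Ω) :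
    (A.indicator f + Aᶜ.indicator g) ω = if ω ∈ A then f ω else g ω := by
  by_cases h : ω ∈ A <;> simp [Set.indicator_apply, h]
/-- **Skorokhod-type obstacle problem, uniqueness.** If `ζ` is another adapted,
square-integrable, a.s. nondecreasing process whose associated process
`Z_t := E t [∑_{u=t}^{N-1} ζ_u + X_N]` (`Z_N := X_N`) dominates `X` and satisfies
`Z_t = X_t` a.s. at every point of increase of `ζ` (convention `ζ_{-1} = -∞`), then
`ζ_t = max_{0≤v≤t} L_v` a.s. for every `t ∈ {0,...,N-1}`. -/
theorem skorokhod_obstacle_uniqueness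
{Ω : Type*} [TopologicalSpace Ω] [PolishSpace Ω]
    [m0 : MeasurableSpace Ω] [BorelSpace Ω]
    (μ : Measure Ω) [IsProbabilityMeasure μ]
    (F : Filtration ℕ m0) (N : ℕ) (hN : 1 ≤ N)
    (EE : NLExp μ F N)
(X : ℕ → Ω → ℝ)
    (hX_adapted : ∀ t, t ≤ N → StronglyMeasurable[F t] (X t))
    (hX_sqInt : ∀ t, t ≤ N → MemLp (X t) 2 μ)
(L : ℕ → Ω → ℝ)
    (hL_adapted : ∀ t, t < N → StronglyMeasurable[F t] (L t))
    (hL_sqInt : ∀ t, t < N →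
      MemLp (fun ω => ∑ u ∈ Finset.Ico t N, runMax L t u ω) 2 μ)
    (hL_rep : ∀ t, t < N →
      X t =ᵐ[μ] EE.E t fun ω => (∑ u ∈ Finset.Ico t N, runMax L t u ω) + X N ω)
    (ζ : ℕ → Ω → ℝ)
    (hζ_adapted : ∀ t, t < N → StronglyMeasurable[F t] (ζ t))
    (hζ_sqInt : ∀ t, t < N → MemLp (ζ t) 2 μ)
    (hζ_mono : ∀ᵐ ω ∂μ, ∀ s t, s ≤ t → t < N → ζ s ω ≤ ζ t ω)
    (Z : ℕ → Ω → ℝ)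
    (hZ_def : ∀ t, t < N →
      Z t = EE.E t fun ω => (∑ u ∈ Finset.Ico t N, ζ u ω) + X N ω)
    (hZ_N : Z N = X N)
    (hZ_dom : ∀ t, t ≤ N → X t ≤ᵐ[μ] Z t)
    (hZ_flat : ∀ᵐ ω ∂μ, ∀ t, t < N →
      (t = 0 ∨ ζ (t - 1) ω < ζ t ω) → Z t ω = X t ω) :
    ∀ t, t < N → ζ t =ᵐ[μ] fun ω => runMax L 0 t ω := by
  -- basic measurability / integrability facts
  have hLmem : ∀ v, v < N → MemLp (L v) 2 μ :=
    memLp_L hN (fun v hv => (hL_adapted v hv).mono (F.le v)) hL_sqInt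
  have hMsm : ∀ t u, t ≤ u → u < N → StronglyMeasurable[F u] (fun ω => runMax L t u ω) :=
    fun t u htu hu => stronglyMeasurable_runMax htu
      (fun v hv1 hv2 => (hL_adapted v (lt_of_le_of_lt hv2 hu)).mono (F.mono hv2))
  have hMmem : ∀ t u, t ≤ u → u < N → MemLp (fun ω => runMax L t u ω) 2 μ :=
    fun t u htu hu => memLp_runMax htu
      (fun v hv1 hv2 => (hL_adapted v (lt_of_le_of_lt hv2 hu)).mono (F.le v))
      (fun v hv1 hv2 => hLmem v (lt_of_le_of_lt hv2 hu))
  -- shared helpers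
  have smζsum : ∀ a b : ℕ, b ≤ N → StronglyMeasurable[F b] (fun ω => ∑ u ∈ Finset.Ico a b, ζ u ω) :=
    fun a b hb => Finset.stronglyMeasurable_fun_sum _ fun u hu =>
      (hζ_adapted u (lt_of_lt_of_le (Finset.mem_Ico.1 hu).2 hb)).mono
        (F.mono (Finset.mem_Ico.1 hu).2.le)
  have mpζsum : ∀ a b : ℕ, b ≤ N → MemLp (fun ω => ∑ u ∈ Finset.Ico a b, ζ u ω) 2 μ :=
    fun a b hb => memLp_finset_sum _ fun u hu =>
      hζ_sqInt u (lt_of_lt_of_le (Finset.mem_Ico.1 hu).2 hb)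
  have smMsum : ∀ a b : ℕ, b ≤ N → StronglyMeasurable[F b] (fun ω => ∑ u ∈ Finset.Ico a b, runMax L a u ω) :=
    fun a b hb => Finset.stronglyMeasurable_fun_sum _ fun u hu =>
      (hMsm a u (Finset.mem_Ico.1 hu).1 (lt_of_lt_of_le (Finset.mem_Ico.1 hu).2 hb)).mono
        (F.mono (Finset.mem_Ico.1 hu).2.le)
  have mpMsum : ∀ a b : ℕ, b ≤ N → MemLp (fun ω => ∑ u ∈ Finset.Ico a b, runMax L a u ω) 2 μ :=
    fun a b hb => memLp_finset_sum _ fun u hu =>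
      hMmem a u (Finset.mem_Ico.1 hu).1 (lt_of_lt_of_le (Finset.mem_Ico.1 hu).2 hb)
  -- claim 1 : ζ t ≥ L t a.s.
  have claim1 : ∀ t, t < N → ∀ᵐ ω ∂μ, L t ω ≤ ζ t ω := by
    intro t ht
    classical
    by_contra hcon
    set B : Set Ω := {ω | ζ t ω < L t ω} with hBdef
    have hBpos : μ B ≠ 0 := by
      intro h0
      apply hcon
      rw [MeasureTheory.ae_iff]
      have hset : {ω | ¬ L t ω ≤ ζ t ω} = B := by
        ext ω; simp [hBdef, not_le]
      rw [hset]; exact h0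
    have hBm : MeasurableSet[F t] B :=
      measurableSet_lt (hζ_adapted t ht).measurable (hL_adapted t ht).measurable
    -- the first increase time after t
    have hex : ∀ ω : Ω, ∃ u, t < u ∧ (u = N ∨ ζ t ω < ζ u ω) :=
      fun ω => ⟨N, ht, Or.inl rfl⟩
    set σ : Ω → ℕ := fun ω => Nat.find (hex ω) with hσdef
    have hσ_gt : ∀ ω, t < σ ω := fun ω => (Nat.find_spec (hex ω)).1
    have hσ_le : ∀ ω, σ ω ≤ N := fun ω => Nat.find_le ⟨ht, Or.inl rfl⟩
    have hσ_spec : ∀ ω, σ ω = N ∨ ζ t ω < ζ (σ ω) ω := fun ω => (Nat.find_spec (hex ω)).2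
    have hσ_min : ∀ ω u, t < u → u < σ ω → ζ u ω ≤ ζ t ω := by
      intro ω u h1 h2
      have h3 := Nat.find_min (hex ω) h2
      push_neg at h3
      exact (h3 h1).2
    set A : ℕ → Set Ω := fun s => {ω | σ ω = s} with hAdef
    have hAm : ∀ s, t < s → s ≤ N → MeasurableSet[F s] (A s) := by
      intro s hs hsN
      have hset : A s = ({ω | s = N ∨ ζ t ω < ζ s ω} ∩
          ⋂ m ∈ Finset.Ico (t+1) s, {ω | ζ m ω ≤ ζ t ω}) := by
        ext ω
        simp only [hAdef, Set.mem_setOf_eq, Set.mem_inter_iff, Set.mem_iInter,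
          Finset.mem_Ico, hσdef]
        rw [Nat.find_eq_iff]
        constructor
        · rintro ⟨⟨_, h2⟩, h3⟩
          refine ⟨h2, fun m hm => ?_⟩
          have h4 := h3 m hm.2
          push_neg at h4
          exact (h4 (by omega)).2
        · rintro ⟨h2, h3⟩
          refine ⟨⟨hs, h2⟩, fun m hm => ?_⟩
          rintro ⟨h4, h5⟩
          rcases h5 with h5 | h5
          · omega
          · exact absurd h5 (not_lt.2 (h3 m ⟨by omega, hm⟩))
      rw [hset]
      refine MeasurableSet.inter ?_ (Finset.measurableSet_biInter _ fun m hm => ?_)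
      · by_cases hsN' : s = N
        · simp [hsN']
        · simp only [hsN', false_or]
          exact measurableSet_lt
            (((hζ_adapted t ht).mono (F.mono hs.le)).measurable)
            (hζ_adapted s (by omega)).measurable
      · have hm' := Finset.mem_Ico.1 hm
        exact measurableSet_le
          (((hζ_adapted m (by omega : m < N)).mono (F.mono (by omega : m ≤ s))).measurable)
          (((hζ_adapted t ht).mono (F.mono hs.le)).measurable)
    -- the relevant random variables
    set φ : Ω → ℝ := fun ω => (∑ u ∈ Finset.Ico t N, ζ u ω) + X N ω with hφdef
    set φ' : ℕ → Ω → ℝ := fun s ω => (∑ u ∈ Finset.Ico t s, ζ u ω) + X s ω with hφ'def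
    set ψ : ℕ → Ω → ℝ := fun s ω => (∑ u ∈ Finset.Ico t s, runMax L t u ω) +
      ((∑ u ∈ Finset.Ico s N, runMax L s u ω) + X N ω) with hψdef
    set φ'' : ℕ → Ω → ℝ := fun s ω => (∑ u ∈ Finset.Ico t s, runMax L t u ω) + X s ω with hφ''def
    set η : Ω → ℝ := fun ω => (∑ u ∈ Finset.Ico t N, runMax L t u ω) + X N ω with hηdef
    set Hh : ℕ → Ω → ℝ := fun r ω => if σ ω ≤ r then φ' (σ ω) ω else φ ω with hHdef
    set Gh : ℕ → Ω → ℝ := fun r ω => if σ ω ≤ r then φ'' (σ ω) ω else ψ (σ ω) ω with hGdef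
    -- measurability and integrability
    have smφ : StronglyMeasurable[F N] φ := (smζsum t N le_rfl).add (hX_adapted N le_rfl)
    have mpφ : MemLp φ 2 μ := (mpζsum t N le_rfl).add (hX_sqInt N le_rfl)
    have smφ's : ∀ s, s ≤ N → StronglyMeasurable[F s] (φ' s) :=
      fun s hs => (smζsum t s hs).add (hX_adapted s hs)
    have smφ' : ∀ s, s ≤ N → StronglyMeasurable[F N] (φ' s) :=
      fun s hs => (smφ's s hs).mono (F.mono hs)
    have mpφ' : ∀ s, s ≤ N → MemLp (φ' s) 2 μ :=
      fun s hs => (mpζsum t s hs).add (hX_sqInt s hs)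
    have smφ''s : ∀ s, s ≤ N → StronglyMeasurable[F s] (φ'' s) :=
      fun s hs => (smMsum t s hs).add (hX_adapted s hs)
    have smφ'' : ∀ s, s ≤ N → StronglyMeasurable[F N] (φ'' s) :=
      fun s hs => (smφ''s s hs).mono (F.mono hs)
    have mpφ'' : ∀ s, s ≤ N → MemLp (φ'' s) 2 μ :=
      fun s hs => (mpMsum t s hs).add (hX_sqInt s hs)
    have smψ : ∀ s, s ≤ N → StronglyMeasurable[F N] (ψ s) :=
      fun s hs => ((smMsum t s hs).mono (F.mono hs)).add
        ((smMsum s N le_rfl).add (hX_adapted N le_rfl))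
    have mpψ : ∀ s, s ≤ N → MemLp (ψ s) 2 μ :=
      fun s hs => (mpMsum t s hs).add ((mpMsum s N le_rfl).add (hX_sqInt N le_rfl))
    have smη : StronglyMeasurable[F N] η := (smMsum t N le_rfl).add (hX_adapted N le_rfl)
    have mpη : MemLp η 2 μ := (mpMsum t N le_rfl).add (hX_sqInt N le_rfl)
    -- indicator representations
    have hmemA : ∀ s ω, ω ∈ A s ↔ σ ω = s := by
      intro s ω; rw [hAdef]; exact Iff.rfl
    have hHrep : ∀ r, Hh r = fun ω => ∑ s ∈ Finset.Ioc t N,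
        (A s).indicator (fun ω' => if s ≤ r then φ' s ω' else φ ω') ω := by
      intro r; funext ω
      symm
      rw [Finset.sum_eq_single (σ ω)]
      · rw [Set.indicator_of_mem ((hmemA (σ ω) ω).2 rfl)]
      · intro b hb hbne
        exact Set.indicator_of_notMem (fun h => hbne ((hmemA b ω).1 h).symm) _
      · intro h
        exact absurd (Finset.mem_Ioc.2 ⟨hσ_gt ω, hσ_le ω⟩) h
    have hGrep : ∀ r, Gh r = fun ω => ∑ s ∈ Finset.Ioc t N,
        (A s).indicator (fun ω' => if s ≤ r then φ'' s ω' else ψ s ω') ω := by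
      intro r; funext ω
      symm
      rw [Finset.sum_eq_single (σ ω)]
      · rw [Set.indicator_of_mem ((hmemA (σ ω) ω).2 rfl)]
      · intro b hb hbne
        exact Set.indicator_of_notMem (fun h => hbne ((hmemA b ω).1 h).symm) _
      · intro h
        exact absurd (Finset.mem_Ioc.2 ⟨hσ_gt ω, hσ_le ω⟩) h
    have smHh : ∀ r, StronglyMeasurable[F N] (Hh r) := by
      intro r
      rw [hHrep r]
      refine Finset.stronglyMeasurable_fun_sum _ fun s hs => ?_
      have hs' := Finset.mem_Ioc.1 hs
      refine StronglyMeasurable.indicator ?_ ((F.mono hs'.2) _ (hAm s hs'.1 hs'.2))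
      by_cases hsr : s ≤ r
      · simp only [hsr, if_true]; exact smφ' s hs'.2
      · simp only [hsr, if_false]; exact smφ
    have mpHh : ∀ r, MemLp (Hh r) 2 μ := by
      intro r
      rw [hHrep r]
      refine memLp_finset_sum _ fun s hs => ?_
      have hs' := Finset.mem_Ioc.1 hs
      refine MemLp.indicator (F.le s _ (hAm s hs'.1 hs'.2)) ?_
      by_cases hsr : s ≤ r
      · simp only [hsr, if_true]; exact mpφ' s hs'.2
      · simp only [hsr, if_false]; exact mpφ
    have smGh : ∀ r, StronglyMeasurable[F N] (Gh r) := by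
      intro r
      rw [hGrep r]
      refine Finset.stronglyMeasurable_fun_sum _ fun s hs => ?_
      have hs' := Finset.mem_Ioc.1 hs
      refine StronglyMeasurable.indicator ?_ ((F.mono hs'.2) _ (hAm s hs'.1 hs'.2))
      by_cases hsr : s ≤ r
      · simp only [hsr, if_true]; exact smφ'' s hs'.2
      · simp only [hsr, if_false]; exact smψ s hs'.2
    have mpGh : ∀ r, MemLp (Gh r) 2 μ := by
      intro r
      rw [hGrep r]
      refine memLp_finset_sum _ fun s hs => ?_
      have hs' := Finset.mem_Ioc.1 hs
      refine MemLp.indicator (F.le s _ (hAm s hs'.1 hs'.2)) ?_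
      by_cases hsr : s ≤ r
      · simp only [hsr, if_true]; exact mpφ'' s hs'.2
      · simp only [hsr, if_false]; exact mpψ s hs'.2
    -- a.e. flatness on A (r+1)
    have hflatA : ∀ r, t ≤ r → r + 1 ≤ N →
        ∀ᵐ ω ∂μ, ω ∈ A (r+1) → Z (r+1) ω = X (r+1) ω := by
      intro r hr hr1
      rcases eq_or_lt_of_le hr1 with hrN | hlt
      · filter_upwards with ω _
        rw [hrN, hZ_N]
      · filter_upwards [hZ_flat] with ω hf hmem
        have hσω : σ ω = r + 1 := (hmemA (r+1) ω).1 hmem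
        have hζt : ζ t ω < ζ (r+1) ω := by
          rcases hσ_spec ω with h5 | h5
          · omega
          · rwa [hσω] at h5
        have hler : ζ r ω ≤ ζ t ω := by
          rcases eq_or_lt_of_le hr with h6 | h6
          · rw [← h6]
          · exact hσ_min ω r h6 (by omega)
        refine hf (r+1) hlt (Or.inr ?_)
        simpa using lt_of_le_of_lt hler hζt
    -- one-step identities for the conditional expectations
    have EstepA : ∀ r, t ≤ r → r + 1 ≤ N →
        EE.E t (Hh (r+1)) =ᵐ[μ] EE.E t (Hh r) := by
      intro r hr hr1
      have hAsm : MeasurableSet[F (r+1)] (A (r+1)) := hAm (r+1) (by omega) hr1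
      have h1 : Hh r = (A (r+1)).indicator φ + (A (r+1))ᶜ.indicator (Hh (r+1)) := by
        funext ω
        rw [indicator_add_compl_apply]
        by_cases hc : σ ω = r + 1
        · rw [if_pos ((hmemA (r+1) ω).2 hc)]
          simp only [hHdef]
          rw [if_neg (by omega)]
        · rw [if_neg (fun h => hc ((hmemA (r+1) ω).1 h))]
          simp only [hHdef]
          by_cases h2 : σ ω ≤ r
          · rw [if_pos h2, if_pos (by omega)]
          · rw [if_neg h2, if_neg (by omega)]
      have h2 : Hh (r+1) = (A (r+1)).indicator (φ' (r+1)) + (A (r+1))ᶜ.indicator (Hh (r+1)) := by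
        funext ω
        rw [indicator_add_compl_apply]
        by_cases hc : σ ω = r + 1
        · rw [if_pos ((hmemA (r+1) ω).2 hc)]
          simp only [hHdef]
          rw [if_pos (by omega), hc]
        · rw [if_neg (fun h => hc ((hmemA (r+1) ω).1 h))]
      have hEφ : EE.E (r+1) φ =ᵐ[μ] fun ω => Z (r+1) ω + ∑ u ∈ Finset.Ico t (r+1), ζ u ω := by
        rcases eq_or_lt_of_le hr1 with hrN | hlt
        · have hid := EE.E_id (le_of_eq hrN)
            (show StronglyMeasurable[F (r+1)] φ by rw [hrN]; exact smφ) mpφ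
          filter_upwards [hid] with ω h
          rw [h]
          simp only [hφdef]
          rw [hrN, hZ_N]
          ring
        · have hsp : φ = (fun ω => (∑ u ∈ Finset.Ico (r+1) N, ζ u ω) + X N ω) +
              (fun ω => ∑ u ∈ Finset.Ico t (r+1), ζ u ω) := by
            funext ω
            simp only [hφdef, Pi.add_apply]
            rw [← Finset.sum_Ico_consecutive (fun u => ζ u ω) (by omega : t ≤ r+1)
              (by omega : r+1 ≤ N)]
            ring
          have htr := EE.translation (r+1) hlt.le
            (fun ω => (∑ u ∈ Finset.Ico (r+1) N, ζ u ω) + X N ω)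
            (fun ω => ∑ u ∈ Finset.Ico t (r+1), ζ u ω)
            ((smζsum (r+1) N le_rfl).add (hX_adapted N le_rfl))
            ((mpζsum (r+1) N le_rfl).add (hX_sqInt N le_rfl))
            (smζsum t (r+1) hr1) (mpζsum t (r+1) hr1)
          rw [← hsp] at htr
          have hZr : Z (r+1) = EE.E (r+1) (fun ω => (∑ u ∈ Finset.Ico (r+1) N, ζ u ω) + X N ω) :=
            hZ_def (r+1) hlt
          filter_upwards [htr] with ω h
          rw [h]
          simp only [Pi.add_apply, hZr]
      have emid : (A (r+1)).indicator (EE.E (r+1) (φ' (r+1)))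
          =ᵐ[μ] (A (r+1)).indicator (EE.E (r+1) φ) := by
        have hid := EE.E_id hr1 (smφ's (r+1) hr1) (mpφ' (r+1) hr1)
        filter_upwards [hid, hEφ, hflatA r hr hr1] with ω h1 h2 h3
        by_cases hc : ω ∈ A (r+1)
        · rw [Set.indicator_of_mem hc, Set.indicator_of_mem hc, h1, h2]
          simp only [hφ'def]
          rw [h3 hc]
          ring
        · rw [Set.indicator_of_notMem hc, Set.indicator_of_notMem hc]
      have EleftA := EE.zeroOne (r+1) hr1 (φ' (r+1)) (Hh (r+1)) (smφ' (r+1) hr1)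
        (mpφ' (r+1) hr1) (smHh (r+1)) (mpHh (r+1)) (A (r+1)) hAsm
      rw [← h2] at EleftA
      have ErightA := EE.zeroOne (r+1) hr1 φ (Hh (r+1)) smφ mpφ
        (smHh (r+1)) (mpHh (r+1)) (A (r+1)) hAsm
      rw [← h1] at ErightA
      have hmid : EE.E (r+1) (Hh (r+1)) =ᵐ[μ] EE.E (r+1) (Hh r) :=
        (EleftA.trans (emid.add (EventuallyEq.rfl))).trans ErightA.symm
      have smE1 : StronglyMeasurable[F N] (EE.E (r+1) (Hh (r+1))) :=
        (EE.adapted (r+1) hr1 _ (smHh (r+1)) (mpHh (r+1))).mono (F.mono hr1)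
      have smE2 : StronglyMeasurable[F N] (EE.E (r+1) (Hh r)) :=
        (EE.adapted (r+1) hr1 _ (smHh r) (mpHh r)).mono (F.mono hr1)
      have mpE1 : MemLp (EE.E (r+1) (Hh (r+1))) 2 μ :=
        EE.sqInt (r+1) hr1 _ (smHh (r+1)) (mpHh (r+1))
      have mpE2 : MemLp (EE.E (r+1) (Hh r)) 2 μ :=
        EE.sqInt (r+1) hr1 _ (smHh r) (mpHh r)
      calc EE.E t (Hh (r+1))
          =ᵐ[μ] EE.E t (EE.E (r+1) (Hh (r+1))) :=
            (EE.tower t (r+1) (by omega) hr1 _ (smHh (r+1)) (mpHh (r+1))).symm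
        _ =ᵐ[μ] EE.E t (EE.E (r+1) (Hh r)) :=
            EE.E_congr ht.le smE1 mpE1 smE2 mpE2 hmid
        _ =ᵐ[μ] EE.E t (Hh r) := EE.tower t (r+1) (by omega) hr1 _ (smHh r) (mpHh r)
    have EstepB : ∀ r, t ≤ r → r + 1 ≤ N →
        EE.E t (Gh (r+1)) =ᵐ[μ] EE.E t (Gh r) := by
      intro r hr hr1
      have hAsm : MeasurableSet[F (r+1)] (A (r+1)) := hAm (r+1) (by omega) hr1
      have h1 : Gh r = (A (r+1)).indicator (ψ (r+1)) + (A (r+1))ᶜ.indicator (Gh (r+1)) := by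
        funext ω
        rw [indicator_add_compl_apply]
        by_cases hc : σ ω = r + 1
        · rw [if_pos ((hmemA (r+1) ω).2 hc)]
          simp only [hGdef]
          rw [if_neg (by omega), hc]
        · rw [if_neg (fun h => hc ((hmemA (r+1) ω).1 h))]
          simp only [hGdef]
          by_cases h2 : σ ω ≤ r
          · rw [if_pos h2, if_pos (by omega)]
          · rw [if_neg h2, if_neg (by omega)]
      have h2 : Gh (r+1) = (A (r+1)).indicator (φ'' (r+1)) + (A (r+1))ᶜ.indicator (Gh (r+1)) := by
        funext ω
        rw [indicator_add_compl_apply]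
        by_cases hc : σ ω = r + 1
        · rw [if_pos ((hmemA (r+1) ω).2 hc)]
          simp only [hGdef]
          rw [if_pos (by omega), hc]
        · rw [if_neg (fun h => hc ((hmemA (r+1) ω).1 h))]
      have hEψ : EE.E (r+1) (ψ (r+1)) =ᵐ[μ]
          fun ω => X (r+1) ω + ∑ u ∈ Finset.Ico t (r+1), runMax L t u ω := by
        have hsp : ψ (r+1) = (fun ω => (∑ u ∈ Finset.Ico (r+1) N, runMax L (r+1) u ω) + X N ω) +
            (fun ω => ∑ u ∈ Finset.Ico t (r+1), runMax L t u ω) := by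
          funext ω
          simp only [hψdef, Pi.add_apply]
          ring
        have htr := EE.translation (r+1) hr1
          (fun ω => (∑ u ∈ Finset.Ico (r+1) N, runMax L (r+1) u ω) + X N ω)
          (fun ω => ∑ u ∈ Finset.Ico t (r+1), runMax L t u ω)
          ((smMsum (r+1) N le_rfl).add (hX_adapted N le_rfl))
          ((mpMsum (r+1) N le_rfl).add (hX_sqInt N le_rfl))
          (smMsum t (r+1) hr1) (mpMsum t (r+1) hr1)
        rw [← hsp] at htr
        have hEtail : EE.E (r+1) (fun ω => (∑ u ∈ Finset.Ico (r+1) N, runMax L (r+1) u ω) + X N ω)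
            =ᵐ[μ] X (r+1) := by
          rcases eq_or_lt_of_le hr1 with hrN | hlt
          · have heq : (fun ω => (∑ u ∈ Finset.Ico (r+1) N, runMax L (r+1) u ω) + X N ω)
                = X (r+1) := by
              funext ω
              rw [hrN]
              simp [Finset.Ico_self]
            rw [heq]
            exact EE.E_id hr1 (hX_adapted (r+1) hr1) (hX_sqInt (r+1) hr1)
          · exact (hL_rep (r+1) hlt).symm
        filter_upwards [htr, hEtail] with ω h1 h2
        rw [h1]
        simp only [Pi.add_apply]
        rw [h2]
      have emid : (A (r+1)).indicator (EE.E (r+1) (φ'' (r+1)))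
          =ᵐ[μ] (A (r+1)).indicator (EE.E (r+1) (ψ (r+1))) := by
        have hid := EE.E_id hr1 (smφ''s (r+1) hr1) (mpφ'' (r+1) hr1)
        filter_upwards [hid, hEψ] with ω h1 h2
        by_cases hc : ω ∈ A (r+1)
        · rw [Set.indicator_of_mem hc, Set.indicator_of_mem hc, h1, h2]
          simp only [hφ''def]
          ring
        · rw [Set.indicator_of_notMem hc, Set.indicator_of_notMem hc]
      have EleftB := EE.zeroOne (r+1) hr1 (φ'' (r+1)) (Gh (r+1)) (smφ'' (r+1) hr1)
        (mpφ'' (r+1) hr1) (smGh (r+1)) (mpGh (r+1)) (A (r+1)) hAsm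
      rw [← h2] at EleftB
      have ErightB := EE.zeroOne (r+1) hr1 (ψ (r+1)) (Gh (r+1)) (smψ (r+1) hr1) (mpψ (r+1) hr1)
        (smGh (r+1)) (mpGh (r+1)) (A (r+1)) hAsm
      rw [← h1] at ErightB
      have hmid : EE.E (r+1) (Gh (r+1)) =ᵐ[μ] EE.E (r+1) (Gh r) :=
        (EleftB.trans (emid.add (EventuallyEq.rfl))).trans ErightB.symm
      have smE1 : StronglyMeasurable[F N] (EE.E (r+1) (Gh (r+1))) :=
        (EE.adapted (r+1) hr1 _ (smGh (r+1)) (mpGh (r+1))).mono (F.mono hr1)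
      have smE2 : StronglyMeasurable[F N] (EE.E (r+1) (Gh r)) :=
        (EE.adapted (r+1) hr1 _ (smGh r) (mpGh r)).mono (F.mono hr1)
      have mpE1 : MemLp (EE.E (r+1) (Gh (r+1))) 2 μ :=
        EE.sqInt (r+1) hr1 _ (smGh (r+1)) (mpGh (r+1))
      have mpE2 : MemLp (EE.E (r+1) (Gh r)) 2 μ :=
        EE.sqInt (r+1) hr1 _ (smGh r) (mpGh r)
      calc EE.E t (Gh (r+1))
          =ᵐ[μ] EE.E t (EE.E (r+1) (Gh (r+1))) :=
            (EE.tower t (r+1) (by omega) hr1 _ (smGh (r+1)) (mpGh (r+1))).symm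
        _ =ᵐ[μ] EE.E t (EE.E (r+1) (Gh r)) :=
            EE.E_congr ht.le smE1 mpE1 smE2 mpE2 hmid
        _ =ᵐ[μ] EE.E t (Gh r) := EE.tower t (r+1) (by omega) hr1 _ (smGh r) (mpGh r)
    -- telescoping
    have keyA : EE.E t (Hh N) =ᵐ[μ] EE.E t (Hh t) := by
      have hind : ∀ r, t ≤ r → r ≤ N → EE.E t (Hh r) =ᵐ[μ] EE.E t (Hh t) := by
        intro r hr
        induction r, hr using Nat.le_induction with
        | base => intro _; exact EventuallyEq.rfl
        | succ n hn ih => intro hn1; exact (EstepA n hn hn1).trans (ih (by omega))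
      exact hind N ht.le le_rfl
    have keyB : EE.E t (Gh N) =ᵐ[μ] EE.E t (Gh t) := by
      have hind : ∀ r, t ≤ r → r ≤ N → EE.E t (Gh r) =ᵐ[μ] EE.E t (Gh t) := by
        intro r hr
        induction r, hr using Nat.le_induction with
        | base => intro _; exact EventuallyEq.rfl
        | succ n hn ih => intro hn1; exact (EstepB n hn hn1).trans (ih (by omega))
      exact hind N ht.le le_rfl
    -- identify E t (Hh N) with Z t
    have hHt : Hh t = φ := by
      funext ω
      simp only [hHdef]
      rw [if_neg (not_le.2 (hσ_gt ω))]
    have hZt : Z t = EE.E t φ := by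
      rw [hφdef]; exact hZ_def t ht
    have hEH : EE.E t (Hh N) =ᵐ[μ] Z t := by
      rw [hZt]
      exact keyA.trans (by rw [hHt])
    -- bound E t (Gh N) by X t
    have hG0 : ∀ ω, Gh t ω ≤ η ω := by
      intro ω
      simp only [hGdef]
      rw [if_neg (not_le.2 (hσ_gt ω))]
      simp only [hψdef, hηdef]
      rw [← Finset.sum_Ico_consecutive (fun u => runMax L t u ω) (hσ_gt ω).le (hσ_le ω)]
      have hterm : ∑ u ∈ Finset.Ico (σ ω) N, runMax L (σ ω) u ω
          ≤ ∑ u ∈ Finset.Ico (σ ω) N, runMax L t u ω :=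
        Finset.sum_le_sum fun u hu =>
          runMax_mono_left (hσ_gt ω).le (Finset.mem_Ico.1 hu).1
      linarith
    have hEGle : EE.E t (Gh N) ≤ᵐ[μ] X t := by
      have hm := EE.mono t ht.le (Gh t) η (smGh t) (mpGh t) smη mpη
        (Filter.Eventually.of_forall hG0)
      have hEη : EE.E t η =ᵐ[μ] X t := (hL_rep t ht).symm
      filter_upwards [keyB, hm, hEη] with ω h1 h2 h3
      rw [h1]
      exact le_trans h2 (le_of_eq h3)
    -- strict comparison on B
    have hHGpt : ∀ ω, ω ∈ B → Hh N ω < Gh N ω := by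
      intro ω hB
      have hBω : ζ t ω < L t ω := hB
      simp only [hHdef, hGdef]
      rw [if_pos (hσ_le ω), if_pos (hσ_le ω)]
      simp only [hφ'def, hφ''def]
      refine add_lt_add_left ?_ _
      refine Finset.sum_lt_sum_of_nonempty (Finset.nonempty_Ico.2 (hσ_gt ω)) ?_
      intro u hu
      have hu' := Finset.mem_Ico.1 hu
      have hζu : ζ u ω ≤ ζ t ω := by
        rcases eq_or_lt_of_le hu'.1 with h6 | h6
        · rw [← h6]
        · exact hσ_min ω u h6 hu'.2
      calc ζ u ω ≤ ζ t ω := hζu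
        _ < L t ω := hBω
        _ ≤ runMax L t u ω := le_runMax le_rfl hu'.1
    set W : Ω → ℝ := B.indicator (Gh N) + Bᶜ.indicator (Hh N) with hWdef
    have smW : StronglyMeasurable[F N] W :=
      ((smGh N).indicator ((F.mono ht.le) _ hBm)).add
        ((smHh N).indicator ((F.mono ht.le) _ hBm).compl)
    have mpW : MemLp W 2 μ :=
      ((mpGh N).indicator (F.le t _ hBm)).add ((mpHh N).indicator (F.le t _ hBm).compl)
    have hleW : Hh N ≤ᵐ[μ] W := by
      refine Filter.Eventually.of_forall fun ω => ?_
      rw [hWdef, indicator_add_compl_apply]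
      by_cases hc : ω ∈ B
      · rw [if_pos hc]; exact (hHGpt ω hc).le
      · rw [if_neg hc]
    have hsetpos : 0 < μ {ω | Hh N ω < W ω} := by
      refine lt_of_lt_of_le (pos_iff_ne_zero.2 hBpos) (measure_mono fun ω hB => ?_)
      have := hHGpt ω hB
      simp only [Set.mem_setOf_eq]
      rw [hWdef, indicator_add_compl_apply, if_pos hB]
      exact this
    have hstrict := EE.strictMono t ht.le (Hh N) W (smHh N) (mpHh N) smW mpW hleW hsetpos
    have hEWzo := EE.zeroOne t ht.le (Gh N) (Hh N) (smGh N) (mpGh N) (smHh N) (mpHh N) B hBm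
    have hcontr : ∀ᵐ ω ∂μ, ¬ (EE.E t (Hh N) ω < EE.E t W ω) := by
      filter_upwards [hEWzo, hEH, hEGle, hZ_dom t ht.le] with ω h1 h2 h3 h4
      rw [hWdef, h1, indicator_add_compl_apply]
      by_cases hc : ω ∈ B
      · rw [if_pos hc, h2]
        exact not_lt.2 (le_trans h3 h4)
      · rw [if_neg hc]
        exact lt_irrefl _
    have h0 : μ {ω | ¬ ¬ (EE.E t (Hh N) ω < EE.E t W ω)} = 0 := MeasureTheory.ae_iff.1 hcontr
    simp only [not_not] at h0
    exact absurd h0 (ne_of_gt hstrict)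
  have h1 : ∀ᵐ ω ∂μ, ∀ t, t < N → L t ω ≤ ζ t ω := by
    rw [MeasureTheory.ae_all_iff]
    intro t
    by_cases ht : t < N
    · filter_upwards [claim1 t ht] with ω h _; exact h
    · filter_upwards with ω h; omega
  -- claim 2 : at points of increase, ζ t ≤ L t a.s.
  have claim2 : ∀ t, t < N →
      ∀ᵐ ω ∂μ, (t = 0 ∨ ζ (t - 1) ω < ζ t ω) → ζ t ω ≤ L t ω := by
    intro t ht
    by_contra hcon
    set C : Set Ω := {ω | ¬ ((t = 0 ∨ ζ (t - 1) ω < ζ t ω) → ζ t ω ≤ L t ω)} with hCdef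
    have hCpos : μ C ≠ 0 := fun h0 => hcon (MeasureTheory.ae_iff.2 h0)
    have hCm : MeasurableSet[F t] C := by
      have hC2 : C = {ω | t = 0 ∨ ζ (t - 1) ω < ζ t ω} ∩ {ω | L t ω < ζ t ω} := by
        ext ω; simp only [hCdef, Set.mem_setOf_eq, Set.mem_inter_iff, _root_.not_imp, not_le]
      rw [hC2]
      refine MeasurableSet.inter ?_
        (measurableSet_lt (hL_adapted t ht).measurable (hζ_adapted t ht).measurable)
      by_cases ht0 : t = 0
      · simp [ht0]
      · simp only [ht0, false_or]
        exact measurableSet_lt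
          (((hζ_adapted (t-1) (by omega)).mono (F.mono (by omega))).measurable)
          (hζ_adapted t ht).measurable
    set ξ : Ω → ℝ := fun ω => (∑ u ∈ Finset.Ico t N, ζ u ω) + X N ω with hξdef
    set η : Ω → ℝ := fun ω => (∑ u ∈ Finset.Ico t N, runMax L t u ω) + X N ω with hηdef
    have smξ : StronglyMeasurable[F N] ξ :=
      (smζsum t N le_rfl).add (hX_adapted N le_rfl)
    have mpξ : MemLp ξ 2 μ := (mpζsum t N le_rfl).add (hX_sqInt N le_rfl)
    have smη : StronglyMeasurable[F N] η :=
      (smMsum t N le_rfl).add (hX_adapted N le_rfl)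
    have mpη : MemLp η 2 μ := (mpMsum t N le_rfl).add (hX_sqInt N le_rfl)
    set W : Ω → ℝ := C.indicator ξ + Cᶜ.indicator η with hWdef
    have smW : StronglyMeasurable[F N] W :=
      (smξ.indicator ((F.mono ht.le) _ hCm)).add
        (smη.indicator ((F.mono ht.le) _ hCm).compl)
    have mpW : MemLp W 2 μ :=
      (mpξ.indicator (F.le t _ hCm)).add (mpη.indicator (F.le t _ hCm).compl)
    -- pointwise inequalities
    have hζM : ∀ᵐ ω ∂μ, ∀ u, t ≤ u → u < N → runMax L t u ω ≤ ζ u ω := by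
      filter_upwards [h1, hζ_mono] with ω h1 hmono
      intro u htu hu
      exact runMax_le' htu fun v hv1 hv2 =>
        le_trans (h1 v (lt_of_le_of_lt hv2 hu)) (hmono v u hv2 hu)
    have hle : η ≤ᵐ[μ] W := by
      filter_upwards [hζM] with ω hM
      rw [hWdef, indicator_add_compl_apply]
      by_cases hc : ω ∈ C
      · simp only [hc, if_true]
        refine add_le_add ?_ le_rfl
        exact Finset.sum_le_sum fun u hu =>
          hM u (Finset.mem_Ico.1 hu).1 (Finset.mem_Ico.1 hu).2
      · simp [hc]
    have hstrictset : 0 < μ {ω | η ω < W ω} := by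
      have hsub : ∀ᵐ ω ∂μ, ω ∈ C → η ω < W ω := by
        filter_upwards [hζM] with ω hM hc
        rw [hWdef, indicator_add_compl_apply]
        simp only [hc, if_true]
        have hc2 : L t ω < ζ t ω := by
          simp only [hCdef, Set.mem_setOf_eq, _root_.not_imp, not_le] at hc
          exact hc.2
        refine add_lt_add_left ?_ _
        refine Finset.sum_lt_sum (fun u hu =>
          hM u (Finset.mem_Ico.1 hu).1 (Finset.mem_Ico.1 hu).2) ⟨t, Finset.mem_Ico.2 ⟨le_rfl, ht⟩, ?_⟩
        rw [runMax_self]; exact hc2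
      have hmle : μ C ≤ μ {ω | η ω < W ω} := by
        refine measure_mono_ae ?_
        filter_upwards [hsub] with ω h hc
        exact h hc
      exact lt_of_lt_of_le (pos_iff_ne_zero.2 hCpos) hmle
    have hstrict := EE.strictMono t ht.le η W smη mpη smW mpW hle hstrictset
    -- identify the conditional expectations
    have hEW := EE.zeroOne t ht.le ξ η smξ mpξ smη mpη C hCm
    have hEξ : Z t = EE.E t ξ := hZ_def t ht
    have hEη : EE.E t η =ᵐ[μ] X t := (hL_rep t ht).symm
    have hflatC : ∀ᵐ ω ∂μ, ω ∈ C → Z t ω = X t ω := by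
      filter_upwards [hZ_flat] with ω hf hc
      simp only [hCdef, Set.mem_setOf_eq, _root_.not_imp, not_le] at hc
      exact hf t ht hc.1
    have : ∀ᵐ ω ∂μ, ¬ (EE.E t η ω < EE.E t W ω) := by
      filter_upwards [hEW, hEη, hflatC, hZ_dom t ht.le] with ω hEW hEη hflat hdom
      rw [hEW, indicator_add_compl_apply]
      by_cases hc : ω ∈ C
      · simp only [hc, if_true]
        rw [← hEξ, hflat hc, hEη]
        exact lt_irrefl _
      · simp [hc]
    have h0 : μ {ω | ¬ ¬ (EE.E t η ω < EE.E t W ω)} = 0 := MeasureTheory.ae_iff.1 this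
    simp only [not_not] at h0
    exact absurd h0 (ne_of_gt hstrict)
  have h2 : ∀ᵐ ω ∂μ, ∀ t, t < N → (t = 0 ∨ ζ (t - 1) ω < ζ t ω) → ζ t ω ≤ L t ω := by
    rw [MeasureTheory.ae_all_iff]
    intro t
    by_cases ht : t < N
    · filter_upwards [claim2 t ht] with ω h _; exact h
    · filter_upwards with ω h; omega
  have key : ∀ᵐ ω ∂μ, ∀ t, t < N → ζ t ω = runMax L 0 t ω := by
    filter_upwards [h1, h2, hζ_mono] with ω h1 h2 hmono
    intro t
    induction t with
    | zero =>
        intro ht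
        rw [runMax_self]
        exact le_antisymm (h2 0 ht (Or.inl rfl)) (h1 0 ht)
    | succ n ih =>
        intro ht
        have hn : n < N := by omega
        have ihn := ih hn
        rw [runMax_succ (Nat.zero_le n)]
        rcases eq_or_lt_of_le (hmono n (n+1) (Nat.le_succ n) ht) with hc | hc
        · rw [← hc, ihn, max_eq_left]
          rw [← ihn, hc]
          exact h1 (n+1) ht
        · have hinc : (n+1 = 0) ∨ ζ (n+1-1) ω < ζ (n+1) ω := Or.inr (by simpa using hc)
          have := le_antisymm (h2 (n+1) ht hinc) (h1 (n+1) ht)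
          rw [this, max_eq_right]
          rw [← ihn] at *
          linarith
  intro t ht
  filter_upwards [key] with ω h
  exact h t ht
end

section
/- Optimality from the Skorokhod-type solution: let η_t := max_{0≤v≤t} L_v for t ∈ {0,...,N-1}, let Y_t := E_t[Σ_{u=t}^{N-1} η_u + X_N] for t ∈ {0,...,N-1} and Y_N := X_N, and define the stopping times τ̲ := min{ v ∈ {0,...,N-1} : η_v ≥ 0 } ∧ N and τ̄ := min{ v ∈ {0,...,N-1} : η_v > 0 } ∧ N. If a stopping time τ* ∈ T_{0,N} satisfies τ̲ ≤ τ* ≤ τ̄ a.s. and Y_{τ*} = X_{τ*} a.s., then τ* maximizes the reward: for every stopping time τ ∈ T_{0,N}, E_0[X_τ] ≤ E_0[X_{τ*}] a.s. -/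
open MeasureTheory Filter

namespace SkorAux

variable {Ω : Type*}

lemma runMax_le {L : ℕ → Ω → ℝ} {t u : ℕ} {ω : Ω} {c : ℝ}
    (hb : L t ω ≤ c) (h : ∀ v ∈ Finset.Icc t u, L v ω ≤ c) : runMax L t u ω ≤ c :=
  (Finset.fold_max_le _).2 ⟨hb, h⟩

lemma le_runMax_base {L : ℕ → Ω → ℝ} {t u : ℕ} {ω : Ω} : L t ω ≤ runMax L t u ω :=
  (Finset.le_fold_max _).2 (Or.inl le_rfl)

lemma le_runMax {L : ℕ → Ω → ℝ} {t u v : ℕ} {ω : Ω} (hv : v ∈ Finset.Icc t u) :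
    L v ω ≤ runMax L t u ω :=
  (Finset.le_fold_max _).2 (Or.inr ⟨v, hv, le_rfl⟩)

lemma runMax_self (L : ℕ → Ω → ℝ) (t : ℕ) (ω : Ω) : runMax L t t ω = L t ω := by
  refine le_antisymm (runMax_le le_rfl fun v hv => ?_) le_runMax_base
  simp only [Finset.mem_Icc] at hv
  obtain rfl : v = t := le_antisymm hv.2 hv.1
  exact le_rfl

lemma runMax_mono_left {L : ℕ → Ω → ℝ} {s t u : ℕ} (hst : s ≤ t) (htu : t ≤ u) (ω : Ω) :
    runMax L t u ω ≤ runMax L s u ω := by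
  refine runMax_le (le_runMax (Finset.mem_Icc.2 ⟨hst, htu⟩)) fun v hv => ?_
  simp only [Finset.mem_Icc] at hv
  exact le_runMax (Finset.mem_Icc.2 ⟨hst.trans hv.1, hv.2⟩)

lemma runMax_mono_right {L : ℕ → Ω → ℝ} {t u u' : ℕ} (h : u ≤ u') (ω : Ω) :
    runMax L t u ω ≤ runMax L t u' ω := by
  refine runMax_le le_runMax_base fun v hv => ?_
  simp only [Finset.mem_Icc] at hv
  exact le_runMax (Finset.mem_Icc.2 ⟨hv.1, hv.2.trans h⟩)

lemma abs_runMax_le {L : ℕ → Ω → ℝ} {t u : ℕ} {ω : Ω} :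
    |runMax L t u ω| ≤ |L t ω| + ∑ v ∈ Finset.Icc t u, |L v ω| := by
  have hsum : (0:ℝ) ≤ ∑ v ∈ Finset.Icc t u, |L v ω| :=
    Finset.sum_nonneg fun v _ => abs_nonneg _
  rw [abs_le]
  constructor
  · have : -(|L t ω| + ∑ v ∈ Finset.Icc t u, |L v ω|) ≤ L t ω := by
      have := neg_abs_le (L t ω); linarith
    exact this.trans le_runMax_base
  · refine runMax_le ?_ fun v hv => ?_
    · have := le_abs_self (L t ω); linarith
    · have h1 : |L v ω| ≤ ∑ w ∈ Finset.Icc t u, |L w ω| :=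
        Finset.single_le_sum (f := fun w => |L w ω|) (fun w _ => abs_nonneg _) hv
      have := le_abs_self (L v ω)
      have := abs_nonneg (L t ω)
      linarith

lemma runMax_le_max {L : ℕ → Ω → ℝ} {t u : ℕ} {ω : Ω} {c : ℝ} (hc : L t ω ≤ c) :
    runMax L t u ω ≤ max c (runMax L (t+1) u ω) := by
  refine runMax_le (hc.trans (le_max_left _ _)) fun v hv => ?_
  simp only [Finset.mem_Icc] at hv
  rcases eq_or_lt_of_le hv.1 with rfl | hlt
  · exact hc.trans (le_max_left _ _)
  · exact (le_runMax (Finset.mem_Icc.2 ⟨hlt, hv.2⟩)).trans (le_max_right _ _)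

lemma measurable_fold_max {m : MeasurableSpace Ω} {L : ℕ → Ω → ℝ} (s : Finset ℕ) {b : Ω → ℝ}
    (hb : Measurable b) (hL : ∀ v ∈ s, Measurable (L v)) :
    Measurable fun ω => s.fold max (b ω) fun v => L v ω := by
  classical
  induction s using Finset.induction_on with
  | empty => simpa using hb
  | @insert a s ha ih =>
    simp only [Finset.fold_insert ha]
    exact (hL a (Finset.mem_insert_self a s)).max
      (ih fun v hv => hL v (Finset.mem_insert_of_mem hv))

lemma measurable_runMax {m : MeasurableSpace Ω} {L : ℕ → Ω → ℝ} {t u : ℕ}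
    (hb : Measurable (L t)) (hL : ∀ v ∈ Finset.Icc t u, Measurable (L v)) :
    Measurable fun ω => runMax L t u ω :=
  measurable_fold_max _ hb hL

lemma memℒp_max {m0 : MeasurableSpace Ω} {μ : Measure Ω} {f g : Ω → ℝ}
    (hf : MemLp f 2 μ) (hg : MemLp g 2 μ) : MemLp (fun ω => max (f ω) (g ω)) 2 μ := by
  refine MemLp.of_le (hf.norm.add hg.norm)
    ((hf.aestronglyMeasurable.aemeasurable.max hg.aestronglyMeasurable.aemeasurable).aestronglyMeasurable) ?_
  filter_upwards with ω
  simp only [Real.norm_eq_abs, Pi.add_apply, abs_abs]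
  have h1 := abs_nonneg (f ω); have h2 := abs_nonneg (g ω)
  rw [abs_of_nonneg (by linarith : (0:ℝ) ≤ |f ω| + |g ω|)]
  rcases max_cases (f ω) (g ω) with ⟨h, _⟩ | ⟨h, _⟩ <;> rw [h]
  · have := le_abs_self (f ω); have := neg_abs_le (f ω); rw [abs_le]; constructor <;> linarith
  · have := le_abs_self (g ω); have := neg_abs_le (g ω); rw [abs_le]; constructor <;> linarith

end SkorAux
section NL

variable {Ω : Type*} {m0 : MeasurableSpace Ω} {μ : MeasureTheory.Measure Ω}
  {F : MeasureTheory.Filtration ℕ m0} {N : ℕ}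

lemma E_zero (EE : NLExp μ F N) {t : ℕ} (ht : t ≤ N) : EE.E t 0 =ᵐ[μ] 0 := by
  have h0m : StronglyMeasurable[F N] (0 : Ω → ℝ) := stronglyMeasurable_const
  have h0p : MemLp (0 : Ω → ℝ) 2 μ := MemLp.zero
  have hcm := EE.adapted t ht 0 h0m h0p
  have hcp := EE.sqInt t ht 0 h0m h0p
  have h1 := EE.translation t ht 0 (EE.E t 0) h0m h0p hcm hcp
  rw [zero_add] at h1
  have h2 := EE.tower t t le_rfl ht 0 h0m h0p
  filter_upwards [h1, h2] with ω e1 e2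
  have h3 := e2.symm.trans e1
  simp only [Pi.add_apply] at h3
  simp only [Pi.zero_apply]; linarith

lemma E_fix (EE : NLExp μ F N) {t : ℕ} (ht : t ≤ N) {f : Ω → ℝ}
    (hm : StronglyMeasurable[F t] f) (hp : MemLp f 2 μ) : EE.E t f =ᵐ[μ] f := by
  have h1 := EE.translation t ht 0 f stronglyMeasurable_const MemLp.zero hm hp
  rw [zero_add] at h1
  filter_upwards [h1, E_zero EE ht] with ω e1 e2
  rw [e1, Pi.add_apply, e2, Pi.zero_apply, zero_add]

lemma E_congr (EE : NLExp μ F N) {t : ℕ} (ht : t ≤ N) {f g : Ω → ℝ}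
    (hfm : StronglyMeasurable[F N] f) (hfp : MemLp f 2 μ)
    (hgm : StronglyMeasurable[F N] g) (hgp : MemLp g 2 μ)
    (h : f =ᵐ[μ] g) : EE.E t f =ᵐ[μ] EE.E t g := by
  have h1 := EE.mono t ht f g hfm hfp hgm hgp h.le
  have h2 := EE.mono t ht g f hgm hgp hfm hfp h.symm.le
  filter_upwards [h1, h2] with ω e1 e2
  exact le_antisymm e1 e2

lemma stop_eq {σ : Ω → ℕ} (hσ : IsStoppingTime F (fun ω => (σ ω : WithTop ℕ))) (t : ℕ) :
    MeasurableSet[F t] {ω | σ ω = t} := by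
  simpa using hσ.measurableSet_eq t

lemma paste_eq {N : ℕ} (σ : Ω → ℕ) (hσN : ∀ ω, σ ω ≤ N) (f : ℕ → Ω → ℝ) :
    (fun ω => f (σ ω) ω)
      = fun ω => ∑ t ∈ Finset.range (N+1), ({ω' | σ ω' = t}).indicator (f t) ω := by
  funext ω
  rw [Finset.sum_eq_single (σ ω)]
  · exact (Set.indicator_of_mem (by simp : ω ∈ {ω' | σ ω' = σ ω}) _).symm
  · intro b _ hb
    exact Set.indicator_of_notMem (fun h => hb h.symm) _
  · intro h
    exact absurd (Finset.mem_range.2 (Nat.lt_succ_of_le (hσN ω))) h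

lemma paste_sm (σ : Ω → ℕ) (hσ : MeasureTheory.IsStoppingTime F (fun ω => (σ ω : WithTop ℕ))) (hσN : ∀ ω, σ ω ≤ N)
    (f : ℕ → Ω → ℝ) (hm : ∀ t, t ≤ N → StronglyMeasurable[F N] (f t)) :
    StronglyMeasurable[F N] fun ω => f (σ ω) ω := by
  rw [paste_eq σ hσN f]
  refine stronglyMeasurable_iff_measurable.2 (Finset.measurable_sum _ fun t htr => ?_)
  have ht : t ≤ N := Nat.lt_succ_iff.1 (Finset.mem_range.1 htr)
  exact (stronglyMeasurable_iff_measurable.1 (hm t ht)).indicator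
    (F.mono ht _ (stop_eq hσ t))

lemma paste_memℒp (σ : Ω → ℕ) (hσ : MeasureTheory.IsStoppingTime F (fun ω => (σ ω : WithTop ℕ))) (hσN : ∀ ω, σ ω ≤ N)
    (f : ℕ → Ω → ℝ) (hp : ∀ t, t ≤ N → MemLp (f t) 2 μ) :
    MemLp (fun ω => f (σ ω) ω) 2 μ := by
  rw [paste_eq σ hσN f]
  refine memLp_finsetSum _ fun t htr => ?_
  have ht : t ≤ N := Nat.lt_succ_iff.1 (Finset.mem_range.1 htr)
  exact (hp t ht).indicator (F.le t _ (stop_eq hσ t))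

end NL
section Sampling

variable {Ω : Type*} {m0 : MeasurableSpace Ω} {μ : MeasureTheory.Measure Ω}
  {F : MeasureTheory.Filtration ℕ m0} {N : ℕ}

lemma sampling (EE : NLExp μ F N) (σ : Ω → ℕ)
    (hσ : MeasureTheory.IsStoppingTime F (fun ω => (σ ω : WithTop ℕ))) (hσN : ∀ ω, σ ω ≤ N)
    (ξ V : ℕ → Ω → ℝ)
    (hξm : ∀ t, t ≤ N → StronglyMeasurable[F N] (ξ t))
    (hξp : ∀ t, t ≤ N → MemLp (ξ t) 2 μ)
    (hVm : ∀ t, t ≤ N → StronglyMeasurable[F t] (V t))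
    (hVp : ∀ t, t ≤ N → MemLp (V t) 2 μ)
    (hrep : ∀ t, t ≤ N → V t =ᵐ[μ] EE.E t (ξ t)) :
    EE.E 0 (fun ω => ξ (σ ω) ω) =ᵐ[μ] EE.E 0 (fun ω => V (σ ω) ω) := by
  classical
  set h : ℕ → ℕ → Ω → ℝ := fun t s => if s < t then V s else ξ s with hh
  set g : ℕ → Ω → ℝ := fun t ω => h t (σ ω) ω with hg
  have hfam_m : ∀ t s, s ≤ N → StronglyMeasurable[F N] (h t s) := by
    intro t s hs
    by_cases hst : s < t
    · simp only [hh, if_pos hst]; exact (hVm s hs).mono (F.mono hs)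
    · simp only [hh, if_neg hst]; exact hξm s hs
  have hfam_p : ∀ t s, s ≤ N → MemLp (h t s) 2 μ := by
    intro t s hs
    by_cases hst : s < t
    · simp only [hh, if_pos hst]; exact hVp s hs
    · simp only [hh, if_neg hst]; exact hξp s hs
  have hgm : ∀ t, StronglyMeasurable[F N] (g t) := fun t =>
    paste_sm σ hσ hσN (h t) (hfam_m t)
  have hgp : ∀ t, MemLp (g t) 2 μ := fun t =>
    paste_memℒp σ hσ hσN (h t) (hfam_p t)
  have hgval : ∀ t ω, g t ω = if σ ω < t then V (σ ω) ω else ξ (σ ω) ω := by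
    intro t ω
    simp only [hg, hh]
    by_cases hst : σ ω < t
    · rw [if_pos hst, if_pos hst]
    · rw [if_neg hst, if_neg hst]
  have step : ∀ t, t ≤ N → EE.E 0 (g (t+1)) =ᵐ[μ] EE.E 0 (g t) := by
    intro t ht
    set A : Set Ω := {ω | σ ω = t} with hA
    have hAmeas : MeasurableSet[F t] A := stop_eq hσ t
    have key1 : g t = A.indicator (ξ t) + Aᶜ.indicator (g t) := by
      funext ω
      by_cases hω : ω ∈ A
      · have hσω : σ ω = t := hω
        simp only [Pi.add_apply, Set.indicator_of_mem hω,
          Set.indicator_of_notMem (Set.notMem_compl_iff.2 hω)]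
        rw [hgval, if_neg (by omega), hσω, add_zero]
      · simp only [Pi.add_apply, Set.indicator_of_notMem hω,
          Set.indicator_of_mem (Set.mem_compl hω), zero_add]
    have key2 : g (t+1) = A.indicator (V t) + Aᶜ.indicator (g t) := by
      funext ω
      by_cases hω : ω ∈ A
      · have hσω : σ ω = t := hω
        simp only [Pi.add_apply, Set.indicator_of_mem hω,
          Set.indicator_of_notMem (Set.notMem_compl_iff.2 hω)]
        rw [hgval, if_pos (by omega), hσω, add_zero]
      · have hσω : σ ω ≠ t := hω
        simp only [Pi.add_apply, Set.indicator_of_notMem hω,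
          Set.indicator_of_mem (Set.mem_compl hω), zero_add]
        rw [hgval, hgval]
        by_cases hlt : σ ω < t
        · rw [if_pos (by omega), if_pos hlt]
        · rw [if_neg (by omega), if_neg hlt]
    have z1 := EE.zeroOne t ht (ξ t) (g t) (hξm t ht) (hξp t ht) (hgm t) (hgp t) A hAmeas
    have z2 := EE.zeroOne t ht (V t) (g t) ((hVm t ht).mono (F.mono ht)) (hVp t ht)
      (hgm t) (hgp t) A hAmeas
    rw [← key1] at z1
    rw [← key2] at z2
    have hVE : EE.E t (V t) =ᵐ[μ] EE.E t (ξ t) :=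
      (E_fix EE ht (hVm t ht) (hVp t ht)).trans (hrep t ht)
    have hmid : EE.E t (g (t+1)) =ᵐ[μ] EE.E t (g t) := by
      filter_upwards [z1, z2, hVE] with ω e1 e2 e3
      rw [e1, e2]
      by_cases hω : ω ∈ A
      · simp only [Pi.add_apply, Set.indicator_of_mem hω,
          Set.indicator_of_notMem (Set.notMem_compl_iff.2 hω), e3]
      · simp only [Pi.add_apply, Set.indicator_of_notMem hω]
    have hEm : ∀ k : ℕ, StronglyMeasurable[F N] (EE.E t (g k)) := fun k =>
      (EE.adapted t ht (g k) (hgm k) (hgp k)).mono (F.mono ht)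
    have hEp : ∀ k : ℕ, MemLp (EE.E t (g k)) 2 μ := fun k =>
      EE.sqInt t ht (g k) (hgm k) (hgp k)
    calc EE.E 0 (g (t+1))
        =ᵐ[μ] EE.E 0 (EE.E t (g (t+1))) :=
          (EE.tower 0 t (Nat.zero_le t) ht (g (t+1)) (hgm _) (hgp _)).symm
      _ =ᵐ[μ] EE.E 0 (EE.E t (g t)) :=
          E_congr EE (Nat.zero_le N) (hEm _) (hEp _) (hEm _) (hEp _) hmid
      _ =ᵐ[μ] EE.E 0 (g t) := EE.tower 0 t (Nat.zero_le t) ht (g t) (hgm _) (hgp _)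
  have chain : ∀ k, k ≤ N + 1 → EE.E 0 (g k) =ᵐ[μ] EE.E 0 (g 0) := by
    intro k
    induction k with
    | zero => exact fun _ => EventuallyEq.rfl
    | succ n ih =>
      intro hk
      exact (step n (Nat.lt_succ_iff.1 hk)).trans (ih (by omega))
  have hg0 : g 0 = fun ω => ξ (σ ω) ω := by
    funext ω; rw [hgval, if_neg (Nat.not_lt_zero _)]
  have hgN : g (N+1) = fun ω => V (σ ω) ω := by
    funext ω; rw [hgval, if_pos (Nat.lt_succ_of_le (hσN ω))]
  have := chain (N+1) le_rfl
  rw [hg0, hgN] at this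
  exact this.symm

end Sampling
section Lp

variable {Ω : Type*} {m0 : MeasurableSpace Ω} {μ : MeasureTheory.Measure Ω}
  {F : MeasureTheory.Filtration ℕ m0} {N : ℕ}

lemma L_memℒp (L : ℕ → Ω → ℝ)
    (hL_adapted : ∀ t, t < N → StronglyMeasurable[F t] (L t))
    (hL_sqInt : ∀ t, t < N →
      MemLp (fun ω => ∑ u ∈ Finset.Ico t N, runMax L t u ω) 2 μ) :
    ∀ t, t < N → MemLp (L t) 2 μ := by
  have hLmeas : ∀ t, t < N → AEStronglyMeasurable (L t) μ := fun t ht =>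
    ((hL_adapted t ht).mono (F.le t)).aestronglyMeasurable
  have key : ∀ d t, t < N → N - t ≤ d + 1 → MemLp (L t) 2 μ := by
    intro d
    induction d with
    | zero =>
      intro t ht hd
      have hNt : N = t + 1 := by omega
      have heq : L t = fun ω => ∑ u ∈ Finset.Ico t N, runMax L t u ω := by
        funext ω
        rw [hNt, Nat.Ico_succ_singleton, Finset.sum_singleton, SkorAux.runMax_self]
      rw [heq]; exact hL_sqInt t ht
    | succ d ih =>
      intro t ht hd
      by_cases hd' : N - t ≤ d + 1
      · exact ih t ht hd'
      have hNt : N - t = d + 2 := by omega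
      have ht1 : t + 1 < N := by omega
      have ihall : ∀ s, t < s → s < N → MemLp (L s) 2 μ := fun s hs hsN =>
        ih s hsN (by omega)
      -- square-integrability of runMax L (t+1) u for t+1 ≤ u < N
      have hRp : ∀ u, u ∈ Finset.Ico (t+1) N → MemLp (fun ω => runMax L (t+1) u ω) 2 μ := by
        intro u hu
        rw [Finset.mem_Ico] at hu
        have hmeasv : ∀ v, v ∈ Finset.Icc (t+1) u → MemLp (L v) 2 μ := fun v hv => by
          rw [Finset.mem_Icc] at hv
          exact ihall v (by omega) (by omega)
        refine MemLp.of_le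
          ((ihall (t+1) (by omega) ht1).norm.add
            (memLp_finsetSum (Finset.Icc (t+1) u)
              (fun v hv => (hmeasv v hv).norm)))
          (SkorAux.measurable_runMax
            (((hL_adapted (t+1) ht1).mono (F.le _)).measurable)
            (fun v hv => by
              rw [Finset.mem_Icc] at hv
              exact ((hL_adapted v (by omega)).mono (F.le _)).measurable)).aestronglyMeasurable
          ?_
        filter_upwards with ω
        simp only [Real.norm_eq_abs, Pi.add_apply]
        have h1 : |runMax L (t+1) u ω| ≤ |L (t+1) ω| + ∑ v ∈ Finset.Icc (t+1) u, |L v ω| :=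
          SkorAux.abs_runMax_le
        have h2 : (0:ℝ) ≤ |L (t+1) ω| + ∑ v ∈ Finset.Icc (t+1) u, |L v ω| := by
          have := abs_nonneg (L (t+1) ω)
          have : (0:ℝ) ≤ ∑ v ∈ Finset.Icc (t+1) u, |L v ω| :=
            Finset.sum_nonneg fun v _ => abs_nonneg _
          positivity
        calc |runMax L (t+1) u ω| ≤ _ := h1
          _ ≤ |(|L (t+1) ω| + ∑ v ∈ Finset.Icc (t+1) u, |L v ω|)| := le_abs_self _
          _ = |(|L (t+1) ω| + ∑ v ∈ Finset.Icc (t+1) u, ‖L v ω‖)| := by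
              simp [Real.norm_eq_abs]
      set St : Ω → ℝ := fun ω => ∑ u ∈ Finset.Ico t N, runMax L t u ω with hSt
      set St1 : Ω → ℝ := fun ω => ∑ u ∈ Finset.Ico (t+1) N, runMax L (t+1) u ω with hSt1
      have hStp : MemLp St 2 μ := hL_sqInt t ht
      have hSt1p : MemLp St1 2 μ := hL_sqInt (t+1) ht1
      set U : Ω → ℝ := fun ω => St ω - St1 ω with hU
      have hUp : MemLp U 2 μ := hStp.sub hSt1p
      -- splitting of St
      have hsplit : ∀ ω, St ω = L t ω + ∑ u ∈ Finset.Ico (t+1) N, runMax L t u ω := by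
        intro ω
        show (∑ u ∈ Finset.Ico t N, runMax L t u ω) = _
        rw [Finset.sum_eq_sum_Ico_succ_bot ht (fun u => runMax L t u ω),
          SkorAux.runMax_self]
      have hLU : ∀ ω, L t ω ≤ U ω := by
        intro ω
        have hle : St1 ω ≤ ∑ u ∈ Finset.Ico (t+1) N, runMax L t u ω := by
          refine Finset.sum_le_sum fun u hu => ?_
          rw [Finset.mem_Ico] at hu
          exact SkorAux.runMax_mono_left (Nat.le_succ t) hu.1 ω
        have := hsplit ω
        simp only [hU]
        linarith
      set G : Ω → ℝ := fun ω => ∑ u ∈ Finset.Ico (t+1) N, max (U ω) (runMax L (t+1) u ω)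
        with hG
      have hGp : MemLp G 2 μ :=
        memLp_finsetSum (Finset.Ico (t+1) N) fun u hu => SkorAux.memℒp_max hUp (hRp u hu)
      set W : Ω → ℝ := fun ω => St ω - G ω with hW
      have hWp : MemLp W 2 μ := hStp.sub hGp
      have hWL : ∀ ω, W ω ≤ L t ω := by
        intro ω
        have hle : ∑ u ∈ Finset.Ico (t+1) N, runMax L t u ω ≤ G ω := by
          refine Finset.sum_le_sum fun u hu => ?_
          exact SkorAux.runMax_le_max (hLU ω)
        have := hsplit ω
        simp only [hW]
        linarith
      refine MemLp.of_le (hUp.norm.add hWp.norm) (hLmeas t ht) ?_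
      filter_upwards with ω
      simp only [Real.norm_eq_abs, Pi.add_apply, abs_abs]
      have h1 := hLU ω; have h2 := hWL ω
      have h3 := le_abs_self (U ω); have h4 := neg_abs_le (W ω)
      have h5 : (0:ℝ) ≤ |U ω| + |W ω| := by positivity
      have h6 := abs_nonneg (U ω); have h7 := abs_nonneg (W ω)
      rw [abs_of_nonneg h5, abs_le]
      constructor <;> linarith
  intro t ht
  exact key N t ht (by omega)

end Lp
section Main

variable {Ω : Type*} {m0 : MeasurableSpace Ω} {μ : MeasureTheory.Measure Ω}
  {F : MeasureTheory.Filtration ℕ m0} {N : ℕ}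

lemma runMax_memℒp' (L : ℕ → Ω → ℝ) (t u : ℕ)
    (hms : ∀ v, v ≤ u → Measurable[m0] (L v)) (hmt : Measurable[m0] (L t))
    (hps : ∀ v, t ≤ v → v ≤ u → MemLp (L v) 2 μ) (hpt : MemLp (L t) 2 μ) :
    MemLp (fun ω => runMax L t u ω) 2 μ := by
  refine MemLp.of_le
    (hpt.norm.add (memLp_finsetSum (Finset.Icc t u) (fun v hv => by
      rw [Finset.mem_Icc] at hv
      exact (hps v hv.1 hv.2).norm)))
    (SkorAux.measurable_runMax hmt (fun v hv => by
      rw [Finset.mem_Icc] at hv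
      exact hms v hv.2)).aestronglyMeasurable ?_
  filter_upwards with ω
  simp only [Real.norm_eq_abs, Pi.add_apply, abs_abs]
  have h1 : |runMax L t u ω| ≤ |L t ω| + ∑ v ∈ Finset.Icc t u, |L v ω| :=
    SkorAux.abs_runMax_le
  have h2 : (0:ℝ) ≤ ∑ v ∈ Finset.Icc t u, |L v ω| :=
    Finset.sum_nonneg fun v _ => abs_nonneg _
  have h3 := abs_nonneg (L t ω)
  calc |runMax L t u ω| ≤ |L t ω| + ∑ v ∈ Finset.Icc t u, |L v ω| := h1
    _ ≤ |(|L t ω| + ∑ v ∈ Finset.Icc t u, ‖L v ω‖)| := by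
        simp only [Real.norm_eq_abs]
        exact le_abs_self _

end Main

/-- **Optimality from the Skorokhod-type solution.** With `η_t := max_{0≤v≤t} L_v`,
`Y_t := E t [∑_{u=t}^{N-1} η_u + X_N]` (`Y_N := X_N`), and the level-passage times
`τ̲ := min{ v < N : η_v ≥ 0 } ∧ N`, `τ̄ := min{ v < N : η_v > 0 } ∧ N`, any stopping
time `τ*` with `τ̲ ≤ τ* ≤ τ̄` a.s. and `Y_{τ*} = X_{τ*}` a.s. maximizes the reward:
`E 0 [X_τ] ≤ E 0 [X_{τ*}]` a.s. for every stopping time `τ ∈ T_{0,N}`. -/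
theorem skorokhod_solution_optimality
{Ω : Type*} [TopologicalSpace Ω] [PolishSpace Ω]
    [m0 : MeasurableSpace Ω] [BorelSpace Ω]
    (μ : Measure Ω) [IsProbabilityMeasure μ]
    (F : Filtration ℕ m0) (N : ℕ) (hN : 1 ≤ N)
    (EE : NLExp μ F N)
(X : ℕ → Ω → ℝ)
    (hX_adapted : ∀ t, t ≤ N → StronglyMeasurable[F t] (X t))
    (hX_sqInt : ∀ t, t ≤ N → MemLp (X t) 2 μ)
(L : ℕ → Ω → ℝ)
    (hL_adapted : ∀ t, t < N → StronglyMeasurable[F t] (L t))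
    (hL_sqInt : ∀ t, t < N →
      MemLp (fun ω => ∑ u ∈ Finset.Ico t N, runMax L t u ω) 2 μ)
    (hL_rep : ∀ t, t < N →
      X t =ᵐ[μ] EE.E t fun ω => (∑ u ∈ Finset.Ico t N, runMax L t u ω) + X N ω)
(Y : ℕ → Ω → ℝ)
    (hY_def : ∀ t, t < N →
      Y t = EE.E t fun ω => (∑ u ∈ Finset.Ico t N, runMax L 0 u ω) + X N ω)
    (hY_N : Y N = X N)
    (τlow τbar : Ω → ℕ)
    (hτlow_def : ∀ ω, τlow ω = sInf ({v | v < N ∧ 0 ≤ runMax L 0 v ω} ∪ {N}))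
    (hτbar_def : ∀ ω, τbar ω = sInf ({v | v < N ∧ 0 < runMax L 0 v ω} ∪ {N}))
    (τstar : Ω → ℕ) (hτstar : IsStoppingTime F (fun ω => (τstar ω : WithTop ℕ))) (hτstar_le : ∀ ω, τstar ω ≤ N)
    (hbetween : ∀ᵐ ω ∂μ, τlow ω ≤ τstar ω ∧ τstar ω ≤ τbar ω)
    (hhit : ∀ᵐ ω ∂μ, Y (τstar ω) ω = X (τstar ω) ω) :
    ∀ τ : Ω → ℕ, IsStoppingTime F (fun ω => (τ ω : WithTop ℕ)) → (∀ ω, τ ω ≤ N) →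
      EE.E 0 (fun ω => X (τ ω) ω) ≤ᵐ[μ] EE.E 0 fun ω => X (τstar ω) ω := by

  intro τ hτ hτN
  classical
  have hXNm : StronglyMeasurable[F N] (X N) := hX_adapted N le_rfl
  have hXNp : MemLp (X N) 2 μ := hX_sqInt N le_rfl
  have hLp : ∀ v, v < N → MemLp (L v) 2 μ := L_memℒp L hL_adapted hL_sqInt
  have hLm0 : ∀ v, v < N → Measurable[m0] (L v) := fun v hv =>
    ((hL_adapted v hv).mono (F.le v)).measurable
  have hLmN : ∀ v, v < N → StronglyMeasurable[F N] (L v) := fun v hv =>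
    (hL_adapted v hv).mono (F.mono hv.le)
  have hrunm : ∀ t u, t ≤ u → u < N →
      Measurable[F N] (fun ω => runMax L t u ω) := by
    intro t u htu hu
    refine SkorAux.measurable_runMax ?_ ?_
    · exact (hLmN t (lt_of_le_of_lt htu hu)).measurable
    · intro v hv
      rw [Finset.mem_Icc] at hv
      exact (hLmN v (by omega)).measurable
  have hrunp : ∀ t u, t ≤ u → u < N → MemLp (fun ω => runMax L t u ω) 2 μ := by
    intro t u htu hu
    refine runMax_memℒp' L t u ?_ ?_ ?_ ?_
    · intro v hv; exact hLm0 v (by omega)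
    · exact hLm0 t (by omega)
    · intro v hv hvu; exact hLp v (by omega)
    · exact hLp t (by omega)
  -- the two families
  set ξf : ℕ → Ω → ℝ :=
    fun t ω => (∑ u ∈ Finset.Ico t N, runMax L t u ω) + X N ω with hξf
  set ζf : ℕ → Ω → ℝ :=
    fun t ω => (∑ u ∈ Finset.Ico t N, runMax L 0 u ω) + X N ω with hζf
  have hξm : ∀ t, t ≤ N → StronglyMeasurable[F N] (ξf t) := by
    intro t ht
    refine stronglyMeasurable_iff_measurable.2 (Measurable.add ?_ hXNm.measurable)
    refine Finset.measurable_sum _ fun u hu => ?_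
    rw [Finset.mem_Ico] at hu
    exact hrunm t u hu.1 hu.2
  have hζm : ∀ t, t ≤ N → StronglyMeasurable[F N] (ζf t) := by
    intro t ht
    refine stronglyMeasurable_iff_measurable.2 (Measurable.add ?_ hXNm.measurable)
    refine Finset.measurable_sum _ fun u hu => ?_
    rw [Finset.mem_Ico] at hu
    exact hrunm 0 u (Nat.zero_le u) hu.2
  have hξNeq : ξf N = X N := by
    funext ω; simp [hξf, Finset.Ico_self]
  have hξp : ∀ t, t ≤ N → MemLp (ξf t) 2 μ := by
    intro t ht
    rcases lt_or_eq_of_le ht with h | h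
    · exact (hL_sqInt t h).add hXNp
    · subst h; rw [hξNeq]; exact hXNp
  have hζNeq : ζf N = X N := by
    funext ω; simp [hζf, Finset.Ico_self]
  have hζp : ∀ t, t ≤ N → MemLp (ζf t) 2 μ := by
    intro t ht
    refine MemLp.add ?_ hXNp
    refine memLp_finsetSum _ fun u hu => ?_
    rw [Finset.mem_Ico] at hu
    exact hrunp 0 u (Nat.zero_le u) hu.2
  have hXrep : ∀ t, t ≤ N → X t =ᵐ[μ] EE.E t (ξf t) := by
    intro t ht
    rcases lt_or_eq_of_le ht with h | h
    · exact hL_rep t h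
    · subst h; rw [hξNeq]
      exact (E_fix EE le_rfl hXNm hXNp).symm
  have hYrep : ∀ t, t ≤ N → Y t =ᵐ[μ] EE.E t (ζf t) := by
    intro t ht
    rcases lt_or_eq_of_le ht with h | h
    · have : Y t = EE.E t (ζf t) := hY_def t h
      rw [this]
    · subst h; rw [hY_N, hζNeq]
      exact (E_fix EE le_rfl hXNm hXNp).symm
  have hYm : ∀ t, t ≤ N → StronglyMeasurable[F t] (Y t) := by
    intro t ht
    rcases lt_or_eq_of_le ht with h | h
    · have heq : Y t = EE.E t (ζf t) := hY_def t h
      rw [heq]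
      exact EE.adapted t ht (ζf t) (hζm t ht) (hζp t ht)
    · subst h; rw [hY_N]; exact hXNm
  have hYp : ∀ t, t ≤ N → MemLp (Y t) 2 μ := by
    intro t ht
    rcases lt_or_eq_of_le ht with h | h
    · have heq : Y t = EE.E t (ζf t) := hY_def t h
      rw [heq]
      exact EE.sqInt t ht (ζf t) (hζm t ht) (hζp t ht)
    · subst h; rw [hY_N]; exact hXNp
  -- optional sampling applications
  have s1 := sampling EE τ hτ hτN ξf X hξm hξp hX_adapted hX_sqInt hXrep
  have s2 := sampling EE τstar hτstar hτstar_le ζf Y hζm hζp hYm hYp hYrep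
  -- the pathwise inequality
  have hpt : ∀ᵐ ω ∂μ, ξf (τ ω) ω ≤ ζf (τstar ω) ω := by
    filter_upwards [hbetween] with ω hb
    obtain ⟨hlow, hbar⟩ := hb
    have ha : τ ω ≤ N := hτN ω
    have hbN : τstar ω ≤ N := hτstar_le ω
    have step1 : ξf (τ ω) ω ≤ ζf (τ ω) ω := by
      refine add_le_add_left ?_ _
      refine Finset.sum_le_sum fun u hu => ?_
      rw [Finset.mem_Ico] at hu
      exact SkorAux.runMax_mono_left (Nat.zero_le (τ ω)) hu.1 ω
    have hηnonneg : ∀ u, τstar ω ≤ u → u < N → 0 ≤ runMax L 0 u ω := by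
      intro u hbu huN
      have hlowu : τlow ω ≤ u := le_trans hlow hbu
      have hmem : τlow ω ∈ {v | v < N ∧ 0 ≤ runMax L 0 v ω} ∪ {N} := by
        rw [hτlow_def ω]
        exact Nat.sInf_mem ⟨N, Or.inr rfl⟩
      rcases hmem with hm | hm
      · exact le_trans hm.2 (SkorAux.runMax_mono_right hlowu ω)
      · have : τlow ω = N := hm
        omega
    have hηnonpos : ∀ u, u < τstar ω → runMax L 0 u ω ≤ 0 := by
      intro u hub
      by_contra hpos
      push_neg at hpos
      have humem : u ∈ {v | v < N ∧ 0 < runMax L 0 v ω} ∪ {N} :=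
        Or.inl ⟨lt_of_lt_of_le hub hbN, hpos⟩
      have hle : τbar ω ≤ u := by rw [hτbar_def ω]; exact Nat.sInf_le humem
      omega
    have step2 : ζf (τ ω) ω ≤ ζf (τstar ω) ω := by
      refine add_le_add_left ?_ _
      rcases le_total (τ ω) (τstar ω) with hab | hab
      · rw [← Finset.sum_Ico_consecutive (fun u => runMax L 0 u ω) hab hbN]
        have hnp : ∑ u ∈ Finset.Ico (τ ω) (τstar ω), runMax L 0 u ω ≤ 0 :=
          Finset.sum_nonpos fun u hu => hηnonpos u (Finset.mem_Ico.1 hu).2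
        linarith
      · rw [← Finset.sum_Ico_consecutive (fun u => runMax L 0 u ω) hab ha]
        have hnn : 0 ≤ ∑ u ∈ Finset.Ico (τstar ω) (τ ω), runMax L 0 u ω := by
          refine Finset.sum_nonneg fun u hu => ?_
          rw [Finset.mem_Ico] at hu
          exact hηnonneg u hu.1 (lt_of_lt_of_le hu.2 ha)
        linarith
    exact step1.trans step2
  -- measurability of the composed processes
  have mξτ := paste_sm τ hτ hτN ξf hξm
  have pξτ := paste_memℒp τ hτ hτN ξf hξp
  have mζs := paste_sm τstar hτstar hτstar_le ζf hζm
  have pζs := paste_memℒp τstar hτstar hτstar_le ζf hζp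
  have mYs := paste_sm τstar hτstar hτstar_le Y
    (fun t ht => (hYm t ht).mono (F.mono ht))
  have pYs := paste_memℒp τstar hτstar hτstar_le Y hYp
  have mXs := paste_sm τstar hτstar hτstar_le X
    (fun t ht => (hX_adapted t ht).mono (F.mono ht))
  have pXs := paste_memℒp τstar hτstar hτstar_le X hX_sqInt
  have hmono := EE.mono 0 (Nat.zero_le N) (fun ω => ξf (τ ω) ω)
    (fun ω => ζf (τstar ω) ω) mξτ pξτ mζs pζs hpt
  have c1 : EE.E 0 (fun ω => Y (τstar ω) ω) =ᵐ[μ] EE.E 0 (fun ω => X (τstar ω) ω) :=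
    E_congr EE (Nat.zero_le N) mYs pYs mXs pXs hhit
  filter_upwards [s1, s2, hmono, c1] with ω e1 e2 e3 e4
  linarith [e1, e2, e3, e4]
end
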